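/- arXiv:1708.02107 — 2 statements merged into one kernel-verified Lean document; each statement's English description precedes it below -/
import Mathlib

section
/- Let R ≥ 1 and assume ‖Σ_{r=1}^R φ_r²‖_∞ < ∞ and max_{1≤r≤R} ‖φ_r²‖_∞ < ∞. Then for every α ∈ (0,1), with probability at least 1 − α: (1/n²) Σ_{i=1}^n W_R(X_i,X_i)² ≤ ( 1 + max_{1≤r≤R} ‖φ_r²‖_∞ √(log(R/α)/(2n)) ) · (2ρ(R) ‖W_R‖²)/n, where ‖W_R‖² := Σ_{r=1}^R (λ*_r)². -/
open MeasureTheory ProbabilityTheory Filter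

noncomputable section

/-- The rank-`R` truncation `W_R(x,y) = Σ_{r=1}^R λ_r φ_r(x) φ_r(y)` (the first `R`
eigenfunctions being indexed by `0, …, R−1`). -/
def Wapprox {S : Type*} (φ : ℕ → S → ℝ) (lam : ℕ → ℝ) (R : ℕ) (x y : S) : ℝ :=
  ∑ r ∈ Finset.range R, lam r * φ r x * φ r y

lemma hoeffding_core (p u : ℝ) (hp0 : 0 ≤ p) (hp1 : p ≤ 1) (hu : 0 ≤ u) :
    1 - p + p * Real.exp u ≤ Real.exp (p * u + u ^ 2 / 8) := by
  set h : ℝ → ℝ := fun v => 1 - p + p * Real.exp v with hh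
  have hpos : ∀ v, 0 < h v := by
    intro v
    rcases eq_or_lt_of_le hp0 with h0 | h0
    · simp [hh, ← h0]
    · have := Real.exp_pos v
      have : 0 < p * Real.exp v := by positivity
      simp only [hh]; linarith
  set g1 : ℝ → ℝ := fun v => p + v / 4 - p * Real.exp v / h v with hg1def
  set g : ℝ → ℝ := fun v => p * v + v ^ 2 / 8 - Real.log (h v) with hgdef
  have hder_h : ∀ v, HasDerivAt h (p * Real.exp v) v := by
    intro v
    exact ((Real.hasDerivAt_exp v).const_mul p).const_add (1 - p)
  have hder_g : ∀ v, HasDerivAt g (g1 v) v := by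
    intro v
    have h1 : HasDerivAt (fun v : ℝ => p * v + v ^ 2 / 8) (p + v / 4) v := by
      have := ((hasDerivAt_pow 2 v).div_const 8).const_add 0
      have h2 : HasDerivAt (fun v : ℝ => p * v) p v := by
        simpa using (hasDerivAt_id v).const_mul p
      have h3 : HasDerivAt (fun v : ℝ => v ^ 2 / 8) (v / 4) v := by
        have := (hasDerivAt_pow 2 v).div_const 8
        exact this.congr_deriv (by ring)
      exact h2.add h3
    have h4 : HasDerivAt (fun v => Real.log (h v)) (p * Real.exp v / h v) v :=
      (hder_h v).log (hpos v).ne'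
    exact h1.sub h4
  have hder_g1 : ∀ v, HasDerivAt g1
      (1 / 4 - (p * Real.exp v / h v) * (1 - p * Real.exp v / h v)) v := by
    intro v
    have hq : HasDerivAt (fun v => p * Real.exp v / h v)
        ((p * Real.exp v * h v - p * Real.exp v * (p * Real.exp v)) / (h v) ^ 2) v :=
      ((Real.hasDerivAt_exp v).const_mul p).div (hder_h v) (hpos v).ne'
    have h5 : HasDerivAt (fun v : ℝ => p + v / 4) (1 / 4) v := by
      simpa using ((hasDerivAt_id v).div_const 4).const_add p
    have := h5.sub hq
    refine this.congr_deriv ?_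
    have hv := (hpos v).ne'
    field_simp
  have hg1mono : Monotone g1 := by
    apply monotone_of_deriv_nonneg
    · intro v; exact (hder_g1 v).differentiableAt
    · intro v
      rw [(hder_g1 v).deriv]
      set q := p * Real.exp v / h v
      nlinarith [sq_nonneg (q - 1 / 2)]
  have hg1zero : g1 0 = 0 := by
    simp only [hg1def, hh]
    rw [Real.exp_zero]
    have : (1 : ℝ) - p + p * 1 = 1 := by ring
    rw [this]
    ring
  have hg1nonneg : ∀ v, 0 ≤ v → 0 ≤ g1 v := by
    intro v hv; rw [← hg1zero]; exact hg1mono hv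
  have hgmono : MonotoneOn g (Set.Ici 0) := by
    apply monotoneOn_of_deriv_nonneg (convex_Ici 0)
    · exact Continuous.continuousOn (by
        fun_prop (disch := intro v; exact (hpos v).ne'))
    · intro v hv; exact (hder_g v).differentiableAt.differentiableWithinAt
    · intro v hv
      rw [(hder_g v).deriv]
      exact hg1nonneg v (le_of_lt (by simpa using hv))
  have hgzero : g 0 = 0 := by
    simp [hgdef, hh]
  have hgu : 0 ≤ g u := by
    rw [← hgzero]
    exact hgmono (Set.mem_Ici.2 le_rfl) (Set.mem_Ici.2 hu) hu
  have hlog : Real.log (h u) ≤ p * u + u ^ 2 / 8 := by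
    simp only [hgdef] at hgu; linarith
  have := (Real.log_le_iff_le_exp (hpos u)).mp hlog
  simpa [hh] using this


lemma mgf_bounded {Ω : Type*} [MeasurableSpace Ω] (μ : Measure Ω) [IsProbabilityMeasure μ]
    (Y : Ω → ℝ) (hY : Measurable Y) (a : ℝ) (ha : 0 < a)
    (hbd : ∀ ω, Y ω ∈ Set.Icc (0 : ℝ) a) (s : ℝ) (hs : 0 ≤ s) :
    ∫ ω, Real.exp (s * Y ω) ∂μ ≤ Real.exp (s * (∫ ω, Y ω ∂μ) + s ^ 2 * a ^ 2 / 8) := by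
  have hYint : Integrable Y μ := by
    refine (integrable_const a).mono' hY.aestronglyMeasurable ?_
    filter_upwards with ω
    rw [Real.norm_eq_abs, abs_of_nonneg (hbd ω).1]
    exact (hbd ω).2
  set m := ∫ ω, Y ω ∂μ with hm
  have hm0 : 0 ≤ m := integral_nonneg fun ω => (hbd ω).1
  have hma : m ≤ a := by
    calc m ≤ ∫ _ω, a ∂μ := integral_mono hYint (integrable_const a) fun ω => (hbd ω).2
    _ = a := by simp
  -- pointwise convexity bound
  have hpt : ∀ ω, Real.exp (s * Y ω) ≤ 1 - Y ω / a + (Y ω / a) * Real.exp (s * a) := by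
    intro ω
    have hθ0 : 0 ≤ Y ω / a := div_nonneg (hbd ω).1 ha.le
    have hθ1 : Y ω / a ≤ 1 := (div_le_one ha).2 (hbd ω).2
    have := convexOn_exp.2 (Set.mem_univ (0 : ℝ)) (Set.mem_univ (s * a))
      (by linarith : (0:ℝ) ≤ 1 - Y ω / a) hθ0 (by ring)
    simp only [smul_eq_mul, mul_zero, zero_add, Real.exp_zero, mul_one] at this
    have hx : (Y ω / a) * (s * a) = s * Y ω := by field_simp
    rw [hx] at this
    linarith
  have hint2 : Integrable (fun ω => 1 - Y ω / a + (Y ω / a) * Real.exp (s * a)) μ := by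
    apply Integrable.add
    · exact (integrable_const 1).sub (hYint.div_const a)
    · exact (hYint.div_const a).mul_const _
  have hintL : Integrable (fun ω => Real.exp (s * Y ω)) μ := by
    refine (integrable_const (Real.exp (s * a))).mono'
      (hY.const_mul s).exp.aestronglyMeasurable ?_
    filter_upwards with ω
    rw [Real.norm_eq_abs, abs_of_pos (Real.exp_pos _), Real.exp_le_exp]
    exact mul_le_mul_of_nonneg_left (hbd ω).2 hs
  calc ∫ ω, Real.exp (s * Y ω) ∂μ
      ≤ ∫ ω, (1 - Y ω / a + (Y ω / a) * Real.exp (s * a)) ∂μ :=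
        integral_mono hintL hint2 hpt
    _ = 1 - m / a + (m / a) * Real.exp (s * a) := by
        have e1 : Integrable (fun ω => 1 - Y ω / a) μ :=
          (integrable_const 1).sub (hYint.div_const a)
        rw [integral_add e1 ((hYint.div_const a).mul_const _),
          integral_sub (integrable_const 1) (hYint.div_const a),
          integral_mul_const, integral_div]
        simp [hm]
    _ ≤ Real.exp ((m / a) * (s * a) + (s * a) ^ 2 / 8) :=
        hoeffding_core (m / a) (s * a) (div_nonneg hm0 ha.le) ((div_le_one ha).2 hma)
          (mul_nonneg hs ha.le)
    _ = Real.exp (s * m + s ^ 2 * a ^ 2 / 8) := by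
        congr 1
        field_simp

lemma hoeffding_tail {Ω : Type*} [MeasurableSpace Ω] (μ : Measure Ω) [IsProbabilityMeasure μ]
    (n : ℕ) (Y : Fin n → Ω → ℝ)
    (hmeas : ∀ i, Measurable (Y i))
    (hindep : iIndepFun Y μ)
    (a : ℝ) (ha : 0 < a)
    (hbd : ∀ i ω, Y i ω ∈ Set.Icc (0 : ℝ) a)
    (hmean : ∀ i, ∫ ω, Y i ω ∂μ = 1)
    (t : ℝ) (ht : 0 ≤ t) :
    (μ {ω | (n : ℝ) + n * t ≤ ∑ i, Y i ω}).toReal ≤ Real.exp (-(2 * n * t ^ 2 / a ^ 2)) := by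
  set s : ℝ := 4 * t / a ^ 2 with hs_def
  have hs : 0 ≤ s := by positivity
  have hint : ∀ i : Fin n, Integrable (fun ω => Real.exp (s * Y i ω)) μ := by
    intro i
    refine (integrable_const (Real.exp (s * a))).mono'
      ((hmeas i).const_mul s).exp.aestronglyMeasurable ?_
    filter_upwards with ω
    rw [Real.norm_eq_abs, abs_of_pos (Real.exp_pos _), Real.exp_le_exp]
    exact mul_le_mul_of_nonneg_left (hbd i ω).2 hs
  have hintsum : Integrable (fun ω => Real.exp (s * (∑ i, Y i) ω)) μ :=
    hindep.integrable_exp_mul_sum hmeas (fun i _ => hint i)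
  have hchern := measure_ge_le_exp_mul_mgf (X := ∑ i, Y i) (μ := μ) (t := s)
    ((n : ℝ) + n * t) hs hintsum
  have hmgf : mgf (∑ i, Y i) μ s ≤ Real.exp ((n : ℝ) * (s + s ^ 2 * a ^ 2 / 8)) := by
    rw [hindep.mgf_sum hmeas]
    calc ∏ i : Fin n, mgf (Y i) μ s
        ≤ ∏ _i : Fin n, Real.exp (s + s ^ 2 * a ^ 2 / 8) := by
          apply Finset.prod_le_prod
          · intro i _; exact mgf_nonneg
          · intro i _
            have := mgf_bounded μ (Y i) (hmeas i) a ha (hbd i) s hs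
            rw [hmean i] at this
            simpa [mgf, mul_one] using this
      _ = Real.exp ((n : ℝ) * (s + s ^ 2 * a ^ 2 / 8)) := by
          rw [Finset.prod_const, ← Real.exp_nat_mul]
          simp
  have hset : {ω | (n : ℝ) + n * t ≤ ∑ i, Y i ω} = {ω | (n : ℝ) + n * t ≤ (∑ i, Y i) ω} := by
    ext ω; simp
  rw [hset]
  calc (μ {ω | (n : ℝ) + n * t ≤ (∑ i, Y i) ω}).toReal
      ≤ Real.exp (-s * ((n : ℝ) + n * t)) * mgf (∑ i, Y i) μ s := hchern
    _ ≤ Real.exp (-s * ((n : ℝ) + n * t)) * Real.exp ((n : ℝ) * (s + s ^ 2 * a ^ 2 / 8)) := by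
        exact mul_le_mul_of_nonneg_left hmgf (le_of_lt (Real.exp_pos _))
    _ = Real.exp (-s * ((n : ℝ) + n * t) + (n : ℝ) * (s + s ^ 2 * a ^ 2 / 8)) :=
        (Real.exp_add _ _).symm
    _ ≤ Real.exp (-(2 * n * t ^ 2 / a ^ 2)) := by
        apply le_of_eq
        congr 1
        rw [hs_def]
        have ha2 : (a : ℝ) ≠ 0 := ha.ne'
        field_simp
        ring

/-- **Control of the diagonal term.**  Let `(φ_k)` be an orthonormal family in `L²(σ)`,
`λ* = (λ*_k)` square-summable, `W_R(x,y) = Σ_{r=1}^R λ*_r φ_r(x) φ_r(y)`,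
`ρ ≥ ρ(R) = max(1, ‖Σ_{r=1}^R φ_r²‖_∞ − 1)` and `a ≥ max_{1≤r≤R} ‖φ_r²‖_∞`, with
`X₁, …, Xₙ` i.i.d. of law `σ`.  Then with probability at least `1 − α`:
`(1/n²) Σ_{i=1}^n W_R(X_i,X_i)² ≤ (1 + a √(log(R/α)/(2n))) · 2ρ ‖W_R‖²/n`,
where `‖W_R‖² = Σ_{r=1}^R (λ*_r)²`. -/
theorem diagonal_term_bound
    (S : Type) [MeasurableSpace S] (σm : Measure S) [IsProbabilityMeasure σm]
    (φ : ℕ → S → ℝ) (lam : ℕ → ℝ)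
    (hφmeas : ∀ k, Measurable (φ k))
    (hφortho : ∀ k l, ∫ x, φ k x * φ l x ∂σm = if k = l then 1 else 0)
    (hlam : Summable fun k => (lam k) ^ 2)
    (R : ℕ) (hR : 1 ≤ R)
    (ρ a : ℝ) (hρ1 : 1 ≤ ρ)
    (hρ : ∀ x, ∑ r ∈ Finset.range R, (φ r x) ^ 2 ≤ ρ + 1)
    (ha : ∀ r < R, ∀ x, (φ r x) ^ 2 ≤ a)
    (n : ℕ) (hn : 1 ≤ n)
    (Ω : Type) [MeasurableSpace Ω] (μ : Measure Ω) [IsProbabilityMeasure μ]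
    (X : Fin n → Ω → S)
    (hXmeas : ∀ i, Measurable (X i))
    (hXindep : iIndepFun X μ)
    (hXlaw : ∀ i, Measure.map (X i) μ = σm)
    (α : ℝ) (hα : α ∈ Set.Ioo (0 : ℝ) 1) :
    ENNReal.ofReal (1 - α) ≤
      μ {ω | (1 / (n : ℝ) ^ 2) * ∑ i : Fin n, (Wapprox φ lam R (X i ω) (X i ω)) ^ 2
          ≤ (1 + a * Real.sqrt (Real.log (R / α) / (2 * n)))
              * (2 * ρ * (∑ r ∈ Finset.range R, (lam r) ^ 2)) / n} := by
  obtain ⟨hα0, hα1⟩ := hα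
  have hn0 : (0 : ℝ) < n := by exact_mod_cast hn
  have hR0 : (0 : ℝ) < R := by exact_mod_cast hR
  -- a ≥ 1
  have hmean : ∀ r < R, ∀ i : Fin n, ∫ ω, (φ r (X i ω)) ^ 2 ∂μ = 1 := by
    intro r hr i
    have hσ : ∫ x, (φ r x) ^ 2 ∂σm = 1 := by
      have h := hφortho r r
      rw [if_pos rfl] at h
      rw [← h]
      congr 1; ext x; ring
    rw [← hXlaw i, integral_map (hXmeas i).aemeasurable
      ((hφmeas r).pow_const 2).aestronglyMeasurable] at hσ
    exact hσ
  have ha1 : (1 : ℝ) ≤ a := by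
    have h0 := hmean 0 hR ⟨0, hn⟩
    rw [← h0]
    have hint : Integrable (fun ω => (φ 0 (X ⟨0, hn⟩ ω)) ^ 2) μ := by
      refine (integrable_const a).mono'
        (((hφmeas 0).pow_const 2).comp (hXmeas _)).aestronglyMeasurable ?_
      filter_upwards with ω
      rw [Real.norm_eq_abs, abs_of_nonneg (sq_nonneg _)]
      exact ha 0 hR _
    calc ∫ ω, (φ 0 (X ⟨0, hn⟩ ω)) ^ 2 ∂μ ≤ ∫ _ω, a ∂μ :=
        integral_mono hint (integrable_const a) fun ω => ha 0 hR _
      _ = a := by simp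
  have ha0 : (0 : ℝ) < a := lt_of_lt_of_le one_pos ha1
  set L : ℝ := Real.log (R / α) with hL_def
  have hR1 : (1 : ℝ) ≤ R := by exact_mod_cast hR
  have hL : 0 ≤ L := Real.log_nonneg (by rw [le_div_iff₀ hα0]; linarith)
  set s₀ : ℝ := Real.sqrt (L / (2 * n)) with hs₀_def
  have hs₀ : 0 ≤ s₀ := Real.sqrt_nonneg _
  set t : ℝ := a * s₀ with ht_def
  have ht : 0 ≤ t := mul_nonneg ha0.le hs₀
  -- the bad events
  set bad : ℕ → Set Ω := fun r => {ω | (n : ℝ) + n * t ≤ ∑ i, (φ r (X i ω)) ^ 2} with hbad_def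
  have hbadmeas : ∀ r, MeasurableSet (bad r) := by
    intro r
    apply measurableSet_le measurable_const
    exact Finset.measurable_sum _ fun i _ => ((hφmeas r).pow_const 2).comp (hXmeas i)
  have hbadprob : ∀ r < R, μ (bad r) ≤ ENNReal.ofReal (α / R) := by
    intro r hr
    have htail := hoeffding_tail μ n (fun i ω => (φ r (X i ω)) ^ 2)
      (fun i => ((hφmeas r).pow_const 2).comp (hXmeas i))
      (hXindep.comp _ fun i => (hφmeas r).pow_const 2)
      a ha0
      (fun i ω => ⟨sq_nonneg _, ha r hr _⟩)
      (fun i => hmean r hr i) t ht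
    have hexp : Real.exp (-(2 * n * t ^ 2 / a ^ 2)) = α / R := by
      have ht2 : t ^ 2 = a ^ 2 * (L / (2 * n)) := by
        rw [ht_def, mul_pow, hs₀_def, Real.sq_sqrt (by positivity)]
      have : 2 * (n : ℝ) * t ^ 2 / a ^ 2 = L := by
        rw [ht2]; field_simp
      rw [this, hL_def]
      rw [← Real.log_inv]
      rw [Real.exp_log (by positivity)]
      rw [inv_div]
    rw [hexp] at htail
    calc μ (bad r) = ENNReal.ofReal ((μ (bad r)).toReal) :=
        (ENNReal.ofReal_toReal (measure_ne_top μ _)).symm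
      _ ≤ ENNReal.ofReal (α / R) := ENNReal.ofReal_le_ofReal htail
  -- union bound
  set B : Set Ω := ⋃ r ∈ Finset.range R, bad r with hB_def
  have hBmeas : MeasurableSet B := Finset.measurableSet_biUnion _ fun r _ => hbadmeas r
  have hBprob : μ B ≤ ENNReal.ofReal α := by
    calc μ B ≤ ∑ r ∈ Finset.range R, μ (bad r) := measure_biUnion_finset_le _ _
      _ ≤ ∑ _r ∈ Finset.range R, ENNReal.ofReal (α / R) :=
          Finset.sum_le_sum fun r hr => hbadprob r (Finset.mem_range.mp hr)
      _ = R * ENNReal.ofReal (α / R) := by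
          rw [Finset.sum_const, Finset.card_range, nsmul_eq_mul]
      _ = ENNReal.ofReal α := by
          rw [← ENNReal.ofReal_natCast R, ← ENNReal.ofReal_mul (by positivity)]
          congr 1
          field_simp
  -- good event is contained in target
  have hsub : Bᶜ ⊆ {ω | (1 / (n : ℝ) ^ 2) * ∑ i : Fin n, (Wapprox φ lam R (X i ω) (X i ω)) ^ 2
          ≤ (1 + a * Real.sqrt (Real.log (R / α) / (2 * n)))
              * (2 * ρ * (∑ r ∈ Finset.range R, (lam r) ^ 2)) / n} := by
    intro ω hω
    simp only [hB_def, Set.compl_iUnion, Set.mem_iInter] at hω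
    have hgood : ∀ r ∈ Finset.range R, ∑ i, (φ r (X i ω)) ^ 2 ≤ (n : ℝ) + n * t := by
      intro r hr
      have := hω r hr
      simp only [hbad_def, Set.mem_compl_iff, Set.mem_setOf_eq, not_le] at this
      exact this.le
    set Λ : ℝ := ∑ r ∈ Finset.range R, (lam r) ^ 2 with hΛ_def
    have hΛ0 : 0 ≤ Λ := Finset.sum_nonneg fun r _ => sq_nonneg _
    have hstep1 : ∀ i : Fin n, (Wapprox φ lam R (X i ω) (X i ω)) ^ 2 ≤
        (ρ + 1) * ∑ r ∈ Finset.range R, (lam r) ^ 2 * (φ r (X i ω)) ^ 2 := by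
      intro i
      have hcs := Finset.sum_mul_sq_le_sq_mul_sq (Finset.range R)
        (fun r => lam r * φ r (X i ω)) (fun r => φ r (X i ω))
      have heq : Wapprox φ lam R (X i ω) (X i ω) =
          ∑ r ∈ Finset.range R, (lam r * φ r (X i ω)) * φ r (X i ω) := by
        unfold Wapprox; rfl
      rw [heq]
      calc (∑ r ∈ Finset.range R, (lam r * φ r (X i ω)) * φ r (X i ω)) ^ 2
          ≤ (∑ r ∈ Finset.range R, (lam r * φ r (X i ω)) ^ 2) *
              ∑ r ∈ Finset.range R, (φ r (X i ω)) ^ 2 := hcs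
        _ ≤ (∑ r ∈ Finset.range R, (lam r * φ r (X i ω)) ^ 2) * (ρ + 1) := by
            apply mul_le_mul_of_nonneg_left (hρ _)
            exact Finset.sum_nonneg fun r _ => sq_nonneg _
        _ = (ρ + 1) * ∑ r ∈ Finset.range R, (lam r) ^ 2 * (φ r (X i ω)) ^ 2 := by
            rw [mul_comm]; congr 1; apply Finset.sum_congr rfl; intro r _; ring
    have hstep2 : ∑ i : Fin n, (Wapprox φ lam R (X i ω) (X i ω)) ^ 2 ≤
        (ρ + 1) * (((n : ℝ) + n * t) * Λ) := by
      calc ∑ i : Fin n, (Wapprox φ lam R (X i ω) (X i ω)) ^ 2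
          ≤ ∑ i : Fin n, (ρ + 1) * ∑ r ∈ Finset.range R, (lam r) ^ 2 * (φ r (X i ω)) ^ 2 :=
            Finset.sum_le_sum fun i _ => hstep1 i
        _ = (ρ + 1) * ∑ r ∈ Finset.range R, (lam r) ^ 2 * ∑ i, (φ r (X i ω)) ^ 2 := by
            rw [← Finset.mul_sum, Finset.sum_comm]
            congr 1; apply Finset.sum_congr rfl; intro r _
            rw [Finset.mul_sum]
        _ ≤ (ρ + 1) * ∑ r ∈ Finset.range R, (lam r) ^ 2 * ((n : ℝ) + n * t) := by
            apply mul_le_mul_of_nonneg_left _ (by linarith)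
            apply Finset.sum_le_sum
            intro r hr
            exact mul_le_mul_of_nonneg_left (hgood r hr) (sq_nonneg _)
        _ = (ρ + 1) * (((n : ℝ) + n * t) * Λ) := by
            rw [hΛ_def, ← Finset.sum_mul]; ring
    simp only [Set.mem_setOf_eq]
    calc (1 / (n : ℝ) ^ 2) * ∑ i : Fin n, (Wapprox φ lam R (X i ω) (X i ω)) ^ 2
        ≤ (1 / (n : ℝ) ^ 2) * ((ρ + 1) * (((n : ℝ) + n * t) * Λ)) := by
          apply mul_le_mul_of_nonneg_left hstep2 (by positivity)
      _ = (1 + t) * ((ρ + 1) * Λ) / n := by field_simp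
      _ ≤ (1 + t) * (2 * ρ * Λ) / n := by
          apply div_le_div_of_nonneg_right _ hn0.le
          apply mul_le_mul_of_nonneg_left _ (by linarith)
          nlinarith
  -- conclude
  calc ENNReal.ofReal (1 - α) = 1 - ENNReal.ofReal α := by
        rw [ENNReal.ofReal_sub 1 hα0.le, ENNReal.ofReal_one]
    _ ≤ 1 - μ B := tsub_le_tsub_left hBprob 1
    _ = μ Bᶜ := (prob_compl_eq_one_sub hBmeas).symm
    _ ≤ _ := measure_mono hsub

end
end

section
/- Let R ≥ 0 and n be such that R̃ := Σ_{ℓ=0}^R d_ℓ ≤ n. Then there exists a set 𝔥_R of permutations of [n] with cardinality at most (R+2)!, depending only on R (and the block sizes d₀,…,d_R), such that for every nonincreasing tuple of real numbers λ₁ ≥ λ₂ ≥ … ≥ λ_n and every u ∈ 𝓜_R: min over all permutations σ of [n] of [ Σ_{k=1}^{R̃} (u_k − λ_{σ(k)})² + Σ_{k=R̃+1}^{n} λ_{σ(k)}² ] = min over σ ∈ 𝔥_R of the same quantity. -/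
open MeasureTheory ProbabilityTheory Filter
open scoped RealInnerProductSpace

noncomputable section

/-- The ℓ²-rearrangement distance between two square-summable real sequences:
the infimum over finitely supported permutations `π` of `√(Σ_k (x_k − y_{π k})²)`. -/
def delta2 (x y : ℕ → ℝ) : ℝ :=
  ⨅ π : {π : Equiv.Perm ℕ // {i | π i ≠ i}.Finite},
    Real.sqrt (∑' k, (x k - y (π.1 k)) ^ 2)

/-- Extension of a finite tuple by zeros. -/
def extendF {m : ℕ} (v : Fin m → ℝ) : ℕ → ℝ :=
  fun k => if h : k < m then v ⟨k, h⟩ else 0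

/-- Eigenvalues (with multiplicity) of a real symmetric matrix (junk value `0`
if the matrix is not symmetric). -/
def eigs {n : ℕ} (M : Matrix (Fin n) (Fin n) ℝ) : Fin n → ℝ :=
  if h : M.IsHermitian then h.eigenvalues else 0

/-- Dimension `d_ℓ` of the space of real spherical harmonics of degree `ℓ` on `𝕊^{d−1}`. -/
def dDim (d ℓ : ℕ) : ℕ :=
  if ℓ = 0 then 1 else if ℓ = 1 then d
  else Nat.choose (ℓ + d - 1) ℓ - Nat.choose (ℓ + d - 3) (ℓ - 2)

/-- `R̃ = Σ_{ℓ=0}^R d_ℓ`. -/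
def Rtilde (d R : ℕ) : ℕ := ∑ ℓ ∈ Finset.range (R + 1), dDim d ℓ

/-- The degree (level) of the `k`-th coordinate (0-indexed) of the sequence in which the
degree-`ℓ` coefficient is repeated `d_ℓ` times. -/
def levelOf (d k : ℕ) : ℕ := sInf {ℓ : ℕ | k < Rtilde d ℓ}

/-- The spectrum `λ*` of the integral operator: each `p*_ℓ` repeated with multiplicity `d_ℓ`. -/
def lamStarSeq (d : ℕ) (p : ℕ → ℝ) : ℕ → ℝ := fun k => p (levelOf d k)

/-- The `R̃`-tuple `λ^{*R} = (p*₀ repeated d₀ times, …, p*_R repeated d_R times)`. -/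
def lamStarR (d R : ℕ) (p : ℕ → ℝ) : Fin (Rtilde d R) → ℝ :=
  fun k => p (levelOf d (k : ℕ))

/-- Membership in `𝓜_R`: tuples of `ℝ^{R̃}` that are constant on each block of size `d_ℓ`. -/
def IsBlock (d R : ℕ) (u : Fin (Rtilde d R) → ℝ) : Prop :=
  ∃ c : ℕ → ℝ, ∀ k : Fin (Rtilde d R), u k = c (levelOf d (k : ℕ))

/-- Padding a tuple of length `m` by zeros to a tuple of length `n`. -/
def pad {m : ℕ} (n : ℕ) (v : Fin m → ℝ) : Fin n → ℝ :=
  fun k => if h : (k : ℕ) < m then v ⟨(k : ℕ), h⟩ else 0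

/-- The least-squares objective
`Σ_{k=1}^{R̃} (u_k − λ_{σ(k)})² + Σ_{k=R̃+1}^n λ_{σ(k)}²`. -/
def objective {m n : ℕ} (v : Fin m → ℝ) (lam : Fin n → ℝ) (σ : Equiv.Perm (Fin n)) : ℝ :=
  ∑ k : Fin n, (pad n v k - lam (σ k)) ^ 2

section Aux

variable (d R n : ℕ)

/-- `levelOf d k ≤ R` when `k < Rtilde d R`. -/
lemma levelOf_le {d R k : ℕ} (h : k < Rtilde d R) : levelOf d k ≤ R :=
  Nat.sInf_le h

/-- The group index of coordinate `k`: its level if `k < R̃`, and `R+1` otherwise. -/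
def grpIdx (d R n : ℕ) (k : Fin n) : Fin (R + 2) :=
  if h : (k : ℕ) < Rtilde d R then ⟨levelOf d (k : ℕ), by
    have := levelOf_le h; omega⟩ else ⟨R + 1, by omega⟩

/-- Canonical permutation attached to an ordering `τ` of the groups. -/
def sigmaOf (d R n : ℕ) (τ : Equiv.Perm (Fin (R + 2))) : Equiv.Perm (Fin n) :=
  (Tuple.sort (fun k => τ.symm (grpIdx d R n k)))⁻¹

end Aux


lemma iInf_eq_iInf_subset_of_min {α : Type*} [Finite α] {H : Finset α} {f : α → ℝ} {σ₀ : α}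
    (h0 : σ₀ ∈ H) (hmin : ∀ σ, f σ₀ ≤ f σ) :
    (⨅ σ : α, f σ) = ⨅ σ : H, f (σ : α) := by
  haveI : Nonempty α := ⟨σ₀⟩
  haveI : Nonempty {x // x ∈ H} := ⟨⟨σ₀, h0⟩⟩
  have h1 : (⨅ σ : α, f σ) = f σ₀ :=
    le_antisymm (ciInf_le (Set.Finite.bddBelow (Set.finite_range _)) σ₀) (le_ciInf hmin)
  have h2 : (⨅ σ : H, f (σ : α)) = f σ₀ :=
    le_antisymm (ciInf_le (Set.Finite.bddBelow (Set.finite_range _)) (⟨σ₀, h0⟩ : H))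
      (le_ciInf fun σ => hmin σ)
  rw [h1, h2]

/-- **Computational complexity of the least-squares step (Theorem 3.4).**
Let `d ≥ 3` and `R̃ = Σ_{ℓ=0}^R d_ℓ ≤ n`.  There is a nonempty set `𝔥_R` of
permutations of `[n]`, of cardinality at most `(R+2)!` and depending only on `R`
(and the block sizes `d₀, …, d_R`), such that for every nonincreasing tuple
`λ₁ ≥ … ≥ λ_n` and every `u ∈ 𝓜_R`, the minimum over all permutations `σ` of
`Σ_{k=1}^{R̃} (u_k − λ_{σ(k)})² + Σ_{k=R̃+1}^n λ_{σ(k)}²` equals the minimum of the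
same quantity over `σ ∈ 𝔥_R`. -/


theorem leastSquares_complexity (d : ℕ) (hd : 3 ≤ d) (R n : ℕ)
    (hn : Rtilde d R ≤ n) :
    ∃ H : Finset (Equiv.Perm (Fin n)), H.Nonempty ∧
      H.card ≤ Nat.factorial (R + 2) ∧
      ∀ lam : Fin n → ℝ, Antitone lam →
      ∀ u : Fin (Rtilde d R) → ℝ, IsBlock d R u →
        (⨅ σ : Equiv.Perm (Fin n), objective u lam σ)
          = ⨅ σ : H, objective u lam (σ : Equiv.Perm (Fin n)) := by
  classical
  set H : Finset (Equiv.Perm (Fin n)) :=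
    Finset.image (fun τ : Equiv.Perm (Fin (R + 2)) => sigmaOf d R n τ) Finset.univ with hH
  refine ⟨H, ⟨sigmaOf d R n 1, Finset.mem_image_of_mem _ (Finset.mem_univ _)⟩, ?_, ?_⟩
  · calc H.card ≤ (Finset.univ : Finset (Equiv.Perm (Fin (R + 2)))).card :=
          Finset.card_image_le
      _ = Nat.factorial (R + 2) := by
          rw [Finset.card_univ, Fintype.card_perm, Fintype.card_fin]
  intro lam hlam u hu
  obtain ⟨c, hc⟩ := hu
  -- the padded vector and its value function on groups
  set a : Fin n → ℝ := pad n u with ha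
  set c' : Fin (R + 2) → ℝ := fun ℓ => if (ℓ : ℕ) ≤ R then c (ℓ : ℕ) else 0 with hc'
  have haval : ∀ k : Fin n, a k = c' (grpIdx d R n k) := by
    intro k
    by_cases h : (k : ℕ) < Rtilde d R
    · simp only [ha, pad, grpIdx, h, dif_pos, hc']
      rw [if_pos (levelOf_le h)]
      exact hc ⟨(k : ℕ), h⟩
    · simp only [ha, pad, grpIdx, h, dif_neg, not_false_iff, hc']
      simp
  -- choose the ordering τ making c' ∘ τ antitone
  set τ : Equiv.Perm (Fin (R + 2)) := Tuple.sort (fun ℓ => -c' ℓ) with hτ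
  have hct : Antitone (c' ∘ τ) := by
    have := Tuple.monotone_sort (fun ℓ => -c' ℓ)
    intro i j hij
    have h2 := this hij
    simp only [Function.comp_apply] at h2 ⊢
    rw [← hτ] at h2
    linarith
  set π : Equiv.Perm (Fin n) := Tuple.sort (fun k => τ.symm (grpIdx d R n k)) with hπ
  set σ₀ : Equiv.Perm (Fin n) := sigmaOf d R n τ with hσ₀
  have hσ₀π : σ₀ = π⁻¹ := by rw [hσ₀, sigmaOf, hπ]
  -- a ∘ π is antitone
  have hkey : Monotone ((fun k => τ.symm (grpIdx d R n k)) ∘ π) := Tuple.monotone_sort _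
  have haπ : Antitone (a ∘ π) := by
    intro i j hij
    have h1 := hkey hij
    simp only [Function.comp_apply] at h1 ⊢
    rw [haval, haval]
    have e1 : grpIdx d R n (π i) = τ (τ.symm (grpIdx d R n (π i))) := (τ.apply_symm_apply _).symm
    have e2 : grpIdx d R n (π j) = τ (τ.symm (grpIdx d R n (π j))) := (τ.apply_symm_apply _).symm
    rw [e1, e2]
    exact hct h1
  -- a and lam ∘ σ₀ monovary
  have hmono : Monovary a (fun k => lam (σ₀ k)) := by
    intro i j hij
    have hlt : σ₀ j < σ₀ i := by
      by_contra hcon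
      push_neg at hcon
      exact absurd (hlam hcon) (not_le.mpr hij)
    have : a (π (σ₀ i)) ≤ a (π (σ₀ j)) := haπ hlt.le
    simpa [hσ₀π] using this
  -- objective expansion
  have hobj : ∀ σ : Equiv.Perm (Fin n), objective u lam σ =
      (∑ k : Fin n, (a k) ^ 2) + (∑ k : Fin n, (lam k) ^ 2)
        - 2 * ∑ k : Fin n, a k * lam (σ k) := by
    intro σ
    have hperm : ∑ k : Fin n, (lam (σ k)) ^ 2 = ∑ k : Fin n, (lam k) ^ 2 :=
      Equiv.sum_comp σ (fun i => lam i ^ 2)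
    rw [objective]
    have hterm : ∀ k : Fin n, (pad n u k - lam (σ k)) ^ 2
        = a k ^ 2 + (lam (σ k)) ^ 2 - 2 * (a k * lam (σ k)) := fun k => by
      rw [ha]; ring
    rw [Finset.sum_congr rfl (fun k _ => hterm k)]
    simp only [Finset.sum_add_distrib, Finset.sum_sub_distrib, ← Finset.mul_sum]
    rw [hperm]
  -- σ₀ is a global minimizer
  have hmin : ∀ σ : Equiv.Perm (Fin n), objective u lam σ₀ ≤ objective u lam σ := by
    intro σ
    rw [hobj, hobj]
    have hS : ∑ k : Fin n, a k * lam (σ k) ≤ ∑ k : Fin n, a k * lam (σ₀ k) := by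
      have := hmono.sum_smul_comp_perm_le_sum_smul (σ := σ₀⁻¹ * σ)
      simp only [smul_eq_mul, Equiv.Perm.mul_apply] at this
      simpa using this
    linarith
  have hσ₀H : σ₀ ∈ H := Finset.mem_image_of_mem _ (Finset.mem_univ τ)
  exact iInf_eq_iInf_subset_of_min hσ₀H hmin


end
end
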